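/- There is a universal constant C > 0 such that for every number of agents n, every profile D = (D_1, …, D_n) of independent finitely-supported distributions over unit-sum valuations, and every Bayes–Nash equilibrium q of Probabilistic Serial with respect to D, the expected equilibrium welfare satisfies E_{u∼D, s∼q(u)}[SW_PS(u,s)] ≥ (1/(C·√n))·E_{u∼D}[SW_OPT(u)]; i.e., the Bayesian Price of Anarchy of Probabilistic Serial is O(√n). -/

import Mathlib

/-- A unit-sum valuation over `n` items. -/
def UnitSum {n : ℕ} (v : Fin n → ℝ) : Prop :=
  (∀ j, 0 ≤ v j) ∧ ∑ j, v j = 1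

/-- A unit-range valuation over `n` items. -/
def UnitRange {n : ℕ} (v : Fin n → ℝ) : Prop :=
  (∀ j, 0 ≤ v j ∧ v j ≤ 1) ∧ (∃ j, v j = 1) ∧ (∃ j, v j = 0)

/-- The optimal social welfare: the maximum over matchings (permutations of the
items) of the total utility. -/
noncomputable def SWopt {n : ℕ} (u : Fin n → Fin n → ℝ) : ℝ :=
  Finset.univ.sup' ⟨Equiv.refl (Fin n), Finset.mem_univ _⟩
    (fun μ : Equiv.Perm (Fin n) => ∑ i, u i (μ i))
/-- The state of the Probabilistic Serial eating process: `rem j` is the remaining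
amount of item `j`, `cons i j` the amount of item `j` eaten so far by agent `i`,
`time` the current time, and `fin j` the time at which item `j` was fully consumed. -/
structure PSState (n : ℕ) where
  rem : Fin n → ℝ
  cons : Fin n → Fin n → ℝ
  time : ℝ
  fin : Fin n → ℝ

open Classical in
/-- One phase of the Probabilistic Serial eating process: while some item remains,
every agent eats at rate 1 from her most preferred remaining item (preference
orderings are given as bijections from ranks to items, rank `0` being the most
preferred); the phase lasts until the first moment a currently eaten item is
exhausted. -/
noncomputable def psStep {n : ℕ} (s : Fin n → (Fin n ≃ Fin n)) (st : PSState n) :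
    PSState n :=
  let avail : Finset (Fin n) := Finset.univ.filter (fun j => 0 < st.rem j)
  if h : avail.Nonempty then
    -- the most preferred still-available item of each agent
    let top : Fin n → Fin n := fun i =>
      let R : Finset (Fin n) := Finset.univ.filter (fun r => s i r ∈ avail)
      if hR : R.Nonempty then s i (R.min' hR) else h.choose
    -- the number of agents currently eating item `j`
    let rate : Fin n → ℕ := fun j => (Finset.univ.filter (fun i => top i = j)).card
    -- the duration of the phase: first time an eaten item is exhausted
    let Δ : ℝ := sInf {x : ℝ | ∃ j ∈ avail, 0 < rate j ∧ x = st.rem j / (rate j : ℝ)}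
    { rem := fun j => st.rem j - (rate j : ℝ) * Δ
      cons := fun i j => st.cons i j + (if top i = j then Δ else 0)
      time := st.time + Δ
      fin := fun j =>
        if 0 < st.rem j ∧ st.rem j - (rate j : ℝ) * Δ ≤ 0 then st.time + Δ else st.fin j }
  else st

/-- The final state of the Probabilistic Serial eating process (there are at most
`n` phases, since in each phase at least one item is exhausted). -/
noncomputable def psFinal {n : ℕ} (s : Fin n → (Fin n ≃ Fin n)) : PSState n :=
  (psStep s)^[n] ⟨fun _ => 1, fun _ _ => 0, 0, fun _ => 1⟩

/-- `psProb s i j` is the probability that agent `i` receives item `j` under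
Probabilistic Serial at report profile `s`, i.e. the amount of item `j` eaten by
agent `i`. -/
noncomputable def psProb {n : ℕ} (s : Fin n → (Fin n ≃ Fin n)) (i j : Fin n) : ℝ :=
  (psFinal s).cons i j

/-- `psTime s j` is the time at which item `j` is fully consumed under
Probabilistic Serial at report profile `s`. -/
noncomputable def psTime {n : ℕ} (s : Fin n → (Fin n ≃ Fin n)) (j : Fin n) : ℝ :=
  (psFinal s).fin j

/-- The expected social welfare of Probabilistic Serial at report profile `s`
under true valuation profile `u`. -/
noncomputable def psSW {n : ℕ} (u : Fin n → Fin n → ℝ) (s : Fin n → (Fin n ≃ Fin n)) : ℝ :=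
  ∑ i, ∑ j, psProb s i j * u i j

/-- `s` is a pure Nash equilibrium of Probabilistic Serial at true valuation
profile `u`: no agent can strictly increase her expected utility by unilaterally
reporting a different ordering. -/
def PSNash {n : ℕ} (u : Fin n → Fin n → ℝ) (s : Fin n → (Fin n ≃ Fin n)) : Prop :=
  ∀ (i : Fin n) (s' : Fin n ≃ Fin n),
    ∑ j, psProb (Function.update s i s') i j * u i j ≤ ∑ j, psProb s i j * u i j

namespace PSAux

open Finset

variable {n : ℕ}

/-- The set of available items in a state. -/
noncomputable def availS (st : PSState n) : Finset (Fin n) :=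
  Finset.univ.filter (fun j => 0 < st.rem j)

/-- number of eaters -/
def rateOf (top : Fin n → Fin n) (j : Fin n) : ℕ :=
  (Finset.univ.filter (fun i => top i = j)).card

theorem psStep_of_empty {s : Fin n → (Fin n ≃ Fin n)} {st : PSState n}
    (h : ¬ (availS st).Nonempty) : psStep s st = st := by
  rw [psStep]
  exact dif_neg h

theorem psStep_spec (s : Fin n → (Fin n ≃ Fin n)) (st : PSState n)
    (h : (availS st).Nonempty) :
    ∃ (top : Fin n → Fin n) (Δ : ℝ),
      (∀ i, top i ∈ availS st) ∧
      (∀ i k, k ∈ availS st → (s i).symm (top i) ≤ (s i).symm k) ∧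
      0 < Δ ∧
      (∀ j, j ∈ availS st → (rateOf top j : ℝ) * Δ ≤ st.rem j) ∧
      (∃ j ∈ availS st, 0 < rateOf top j ∧ st.rem j - (rateOf top j : ℝ) * Δ = 0) ∧
      psStep s st =
        { rem := fun j => st.rem j - (rateOf top j : ℝ) * Δ
          cons := fun i j => st.cons i j + (if top i = j then Δ else 0)
          time := st.time + Δ
          fin := fun j =>
            if 0 < st.rem j ∧ st.rem j - (rateOf top j : ℝ) * Δ ≤ 0 then st.time + Δ
            else st.fin j } := by
  classical
  have hR : ∀ i, (Finset.univ.filter (fun r => s i r ∈ availS st)).Nonempty := by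
    intro i
    obtain ⟨j, hj⟩ := h
    exact ⟨(s i).symm j, by simp [hj]⟩
  set top : Fin n → Fin n := fun i =>
    if hR' : (Finset.univ.filter (fun r => s i r ∈ availS st)).Nonempty then
      s i ((Finset.univ.filter (fun r => s i r ∈ availS st)).min' hR')
    else h.choose with htop
  have htopeq : ∀ i, top i = s i ((Finset.univ.filter
      (fun r => s i r ∈ availS st)).min' (hR i)) := by
    intro i; rw [htop]; exact dif_pos (hR i)
  have htopmem : ∀ i, top i ∈ availS st := by
    intro i
    rw [htopeq i]
    have := Finset.min'_mem _ (hR i)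
    simpa using (Finset.mem_filter.1 this).2
  have htopmin : ∀ i k, k ∈ availS st → (s i).symm (top i) ≤ (s i).symm k := by
    intro i k hk
    have hmem : (s i).symm k ∈ Finset.univ.filter (fun r => s i r ∈ availS st) := by
      simp [hk]
    have := Finset.min'_le _ _ hmem
    rw [htopeq i]
    simpa using this
  set X : Set ℝ := {x : ℝ | ∃ j ∈ availS st, 0 < rateOf top j ∧ x = st.rem j / (rateOf top j : ℝ)}
    with hX
  have hXfin : X = ↑(((availS st).filter (fun j => 0 < rateOf top j)).image
      (fun j => st.rem j / (rateOf top j : ℝ))) := by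
    ext x
    simp only [hX, Set.mem_setOf_eq, Finset.coe_image, Set.mem_image, Finset.mem_coe,
      Finset.mem_filter]
    constructor
    · rintro ⟨j, hj, hr, rfl⟩; exact ⟨j, ⟨hj, hr⟩, rfl⟩
    · rintro ⟨j, ⟨hj, hr⟩, rfl⟩; exact ⟨j, hj, hr, rfl⟩
  have hXne : (((availS st).filter (fun j => 0 < rateOf top j)).image
      (fun j => st.rem j / (rateOf top j : ℝ))).Nonempty := by
    obtain ⟨i0⟩ : Nonempty (Fin n) := by
      obtain ⟨j, _⟩ := h; exact ⟨j⟩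
    refine ⟨st.rem (top i0) / (rateOf top (top i0) : ℝ), Finset.mem_image.2 ⟨top i0, ?_, rfl⟩⟩
    refine Finset.mem_filter.2 ⟨htopmem i0, ?_⟩
    exact Finset.card_pos.2 ⟨i0, by simp [rateOf]⟩
  have hInf : sInf X = (((availS st).filter (fun j => 0 < rateOf top j)).image
      (fun j => st.rem j / (rateOf top j : ℝ))).min' hXne := by
    rw [hXfin]
    exact Finset.Nonempty.csInf_eq_min' hXne
  have hrempos : ∀ j ∈ availS st, 0 < st.rem j := by
    intro j hj; simpa [availS] using hj
  have hΔpos : 0 < sInf X := by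
    rw [hInf]
    rw [Finset.lt_min'_iff]
    intro y hy
    obtain ⟨j, hj, rfl⟩ := Finset.mem_image.1 hy
    obtain ⟨hj1, hj2⟩ := Finset.mem_filter.1 hj
    exact div_pos (hrempos j hj1) (by exact_mod_cast hj2)
  have hΔle : ∀ j, j ∈ availS st → (rateOf top j : ℝ) * sInf X ≤ st.rem j := by
    intro j hj
    rcases Nat.eq_zero_or_pos (rateOf top j) with hr | hr
    · rw [hr]; push_cast; rw [zero_mul]; exact le_of_lt (hrempos j hj)
    · have hmem : st.rem j / (rateOf top j : ℝ) ∈ (((availS st).filter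
          (fun j => 0 < rateOf top j)).image (fun j => st.rem j / (rateOf top j : ℝ))) :=
        Finset.mem_image.2 ⟨j, Finset.mem_filter.2 ⟨hj, hr⟩, rfl⟩
      have hle := Finset.min'_le _ _ hmem
      rw [← hInf] at hle
      have hrpos : (0:ℝ) < (rateOf top j : ℝ) := by exact_mod_cast hr
      rw [le_div_iff₀ hrpos] at hle
      linarith [hle]
  have hΔatt : ∃ j ∈ availS st, 0 < rateOf top j ∧
      st.rem j - (rateOf top j : ℝ) * sInf X = 0 := by
    have hmem := Finset.min'_mem _ hXne
    obtain ⟨j, hj, hjeq⟩ := Finset.mem_image.1 hmem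
    obtain ⟨hj1, hj2⟩ := Finset.mem_filter.1 hj
    refine ⟨j, hj1, hj2, ?_⟩
    have hrpos : (0:ℝ) < (rateOf top j : ℝ) := by exact_mod_cast hj2
    rw [hInf, ← hjeq]
    field_simp
    ring
  refine ⟨top, sInf X, htopmem, htopmin, hΔpos, hΔle, hΔatt, ?_⟩
  have h' : (Finset.univ.filter (fun j : Fin n => 0 < st.rem j)).Nonempty := h
  simp only [psStep]
  rw [dif_pos h']
  rfl

/-- the state after `k` phases -/
noncomputable def stK (s : Fin n → (Fin n ≃ Fin n)) (k : ℕ) : PSState n :=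
  (psStep s)^[k] ⟨fun _ => 1, fun _ _ => 0, 0, fun _ => 1⟩

theorem psFinal_eq_stK (s : Fin n → (Fin n ≃ Fin n)) : psFinal s = stK s n := rfl

theorem stK_succ (s : Fin n → (Fin n ≃ Fin n)) (k : ℕ) :
    stK s (k+1) = psStep s (stK s k) := Function.iterate_succ_apply' _ _ _

theorem stK_zero (s : Fin n → (Fin n ≃ Fin n)) :
    stK s 0 = ⟨fun _ => 1, fun _ _ => 0, 0, fun _ => 1⟩ := rfl

/-- if an item is exhausted, nobody eats it, so one `psStep` changes nothing about it -/
theorem step_dead {s : Fin n → (Fin n ≃ Fin n)} {st : PSState n} {j : Fin n}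
    (hj : st.rem j = 0) :
    (psStep s st).rem j = 0 ∧ (psStep s st).fin j = st.fin j := by
  by_cases h : (availS st).Nonempty
  · obtain ⟨top, Δ, hmem, hmin, hΔ, hle, hatt, heq⟩ := psStep_spec s st h
    have hnotav : j ∉ availS st := by simp [availS, hj]
    have hrate : rateOf top j = 0 := by
      rw [rateOf, Finset.card_eq_zero, Finset.filter_eq_empty_iff]
      intro i _
      intro hcon
      exact hnotav (hcon ▸ hmem i)
    rw [heq]
    constructor
    · simp [hrate, hj]
    · simp [hj]
  · rw [psStep_of_empty h]
    exact ⟨hj, rfl⟩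

theorem step_time_le {s : Fin n → (Fin n ≃ Fin n)} {st : PSState n} :
    st.time ≤ (psStep s st).time := by
  by_cases h : (availS st).Nonempty
  · obtain ⟨top, Δ, hmem, hmin, hΔ, hle, hatt, heq⟩ := psStep_spec s st h
    rw [heq]; simp; linarith
  · rw [psStep_of_empty h]

theorem step_time_lt {s : Fin n → (Fin n ≃ Fin n)} {st : PSState n}
    (h : (availS st).Nonempty) : st.time < (psStep s st).time := by
  obtain ⟨top, Δ, hmem, hmin, hΔ, hle, hatt, heq⟩ := psStep_spec s st h
  rw [heq]; simp; linarith

theorem time_mono (s : Fin n → (Fin n ≃ Fin n)) {k k' : ℕ} (hkk : k ≤ k') :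
    (stK s k).time ≤ (stK s k').time := by
  induction k' , hkk using Nat.le_induction with
  | base => exact le_refl _
  | succ k' hk ih => exact le_trans ih (by rw [stK_succ]; exact step_time_le)

theorem dead_chain (s : Fin n → (Fin n ≃ Fin n)) {k k' : ℕ} (hkk : k ≤ k') {j : Fin n}
    (hj : (stK s k).rem j = 0) :
    (stK s k').rem j = 0 ∧ (stK s k').fin j = (stK s k).fin j := by
  induction k' , hkk using Nat.le_induction with
  | base => exact ⟨hj, rfl⟩
  | succ k' hk ih =>
    rw [stK_succ]
    obtain ⟨h1, h2⟩ := ih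
    obtain ⟨h3, h4⟩ := step_dead (s := s) h1
    exact ⟨h3, h2 ▸ h4⟩

/-- the main invariants, by induction on the number of phases -/
structure MS (s : Fin n → (Fin n ≃ Fin n)) (k : ℕ) : Prop where
  rem_nonneg : ∀ j, 0 ≤ (stK s k).rem j
  rem_le_one : ∀ j, (stK s k).rem j ≤ 1
  sum_rem : ∑ j, (stK s k).rem j = n * (1 - (stK s k).time)
  time_nonneg : 0 ≤ (stK s k).time
  sum_cons : ∀ j, ∑ i, (stK s k).cons i j = 1 - (stK s k).rem j
  fin_alive : ∀ j, 0 < (stK s k).rem j → (stK s k).fin j = 1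
  avail_card : (availS (stK s k)).card ≤ n - k
  deaths : ∀ j, (stK s k).rem j = 0 → ∃ m, m < k ∧ 0 < (stK s m).rem j ∧
    (stK s (m+1)).rem j = 0 ∧ (stK s k).fin j = (stK s (m+1)).time

theorem master (s : Fin n → (Fin n ≃ Fin n)) : ∀ k, MS s k := by
  intro k
  induction k with
  | zero =>
    refine ⟨fun j => zero_le_one, fun j => le_refl 1, by simp [stK_zero], le_refl 0,
      fun j => by simp [stK_zero], fun j _ => rfl, by simpa [availS] using Finset.card_filter_le (Finset.univ : Finset (Fin n)) _, fun j hj => ?_⟩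
    · exact absurd hj one_ne_zero
  | succ k ih =>
    by_cases hav : (availS (stK s k)).Nonempty
    · obtain ⟨top, Δ, hmem, hmin, hΔ, hle, hatt, heq⟩ := psStep_spec s (stK s k) hav
      have hdead : ∀ j, j ∉ availS (stK s k) → rateOf top j = 0 ∧ (stK s k).rem j = 0 := by
        intro j hj
        constructor
        · rw [rateOf, Finset.card_eq_zero, Finset.filter_eq_empty_iff]
          intro i _ hcon
          exact hj (hcon ▸ hmem i)
        · have h1 := ih.rem_nonneg j
          have h2 : ¬ (0 < (stK s k).rem j) := by simpa [availS] using hj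
          linarith
      have hratenn : ∀ j, (0:ℝ) ≤ (rateOf top j : ℝ) * Δ := fun j =>
        mul_nonneg (Nat.cast_nonneg _) (le_of_lt hΔ)
      have hremle : ∀ j, (stK s (k+1)).rem j ≤ (stK s k).rem j := by
        intro j
        rw [stK_succ, heq]
        simp only
        linarith [hratenn j]
      have hrem' : ∀ j, 0 ≤ (stK s (k+1)).rem j := by
        intro j
        rw [stK_succ, heq]
        simp only
        by_cases hj : j ∈ availS (stK s k)
        · linarith [hle j hj]
        · obtain ⟨h1, h2⟩ := hdead j hj
          simp [h1, h2]
      have hsumrate : ∑ j, (rateOf top j : ℝ) = n := by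
        have : Finset.univ.card = ∑ j ∈ Finset.univ, (Finset.univ.filter
            (fun i => top i = j)).card :=
          Finset.card_eq_sum_card_fiberwise (fun i _ => Finset.mem_univ (top i))
        have := congrArg (Nat.cast : ℕ → ℝ) this
        push_cast at this
        rw [Finset.card_univ, Fintype.card_fin] at this
        simpa [rateOf] using this.symm
      have hsubset : availS (stK s (k+1)) ⊆ availS (stK s k) := by
        intro j hj
        have hj' : 0 < (stK s (k+1)).rem j := by simpa [availS] using hj
        have : 0 < (stK s k).rem j := lt_of_lt_of_le hj' (hremle j)
        simpa [availS] using this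
      refine ⟨hrem', fun j => le_trans (hremle j) (ih.rem_le_one j), ?_, ?_, ?_, ?_, ?_, ?_⟩
      · rw [stK_succ, heq]
        simp only
        rw [Finset.sum_sub_distrib, ih.sum_rem, ← Finset.sum_mul, hsumrate]
        ring
      · rw [stK_succ, heq]
        simp only
        linarith [ih.time_nonneg]
      · intro j
        rw [stK_succ, heq]
        simp only
        rw [Finset.sum_add_distrib, ih.sum_cons j]
        have : ∑ i, (if top i = j then Δ else 0) = (rateOf top j : ℝ) * Δ := by
          rw [← Finset.sum_filter, Finset.sum_const, rateOf, nsmul_eq_mul]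
        rw [this]; ring
      · intro j hj
        have halk : 0 < (stK s k).rem j := lt_of_lt_of_le hj (hremle j)
        have hfj : (stK s (k+1)).fin j = (stK s k).fin j := by
          rw [stK_succ, heq]
          simp only
          rw [if_neg]
          rw [stK_succ, heq] at hj
          simp only at hj
          rintro ⟨-, hc⟩
          linarith
        rw [hfj]
        exact ih.fin_alive j halk
      · obtain ⟨j0, hj0av, hj0rate, hj0eq⟩ := hatt
        have hj0dead : (stK s (k+1)).rem j0 = 0 := by
          rw [stK_succ, heq]; simpa using hj0eq
        have hsub2 : availS (stK s (k+1)) ⊆ (availS (stK s k)).erase j0 := by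
          intro x hx
          refine Finset.mem_erase.2 ⟨?_, hsubset hx⟩
          rintro rfl
          have : 0 < (stK s (k+1)).rem x := by simpa [availS] using hx
          rw [hj0dead] at this
          exact lt_irrefl 0 this
        have h1 : (availS (stK s (k+1))).card ≤ (availS (stK s k)).card - 1 := by
          have := Finset.card_le_card hsub2
          rwa [Finset.card_erase_of_mem hj0av] at this
        have h2 := ih.avail_card
        have h3 : 0 < (availS (stK s k)).card := Finset.card_pos.2 hav
        omega
      · intro j hj
        by_cases hjk : (stK s k).rem j = 0
        · obtain ⟨m, hm1, hm2, hm3, hm4⟩ := ih.deaths j hjk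
          refine ⟨m, Nat.lt_succ_of_lt hm1, hm2, hm3, ?_⟩
          rw [stK_succ, heq]
          simp only
          rw [if_neg]
          · exact hm4
          · rintro ⟨hc, -⟩
            linarith
        · have halk : 0 < (stK s k).rem j :=
            lt_of_le_of_ne (ih.rem_nonneg j) (Ne.symm hjk)
          refine ⟨k, Nat.lt_succ_self k, halk, hj, ?_⟩
          have hj' : (stK s k).rem j - (rateOf top j : ℝ) * Δ ≤ 0 := by
            rw [stK_succ, heq] at hj
            simp only at hj
            linarith [le_of_eq hj]
          conv_lhs => rw [stK_succ, heq]
          simp only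
          rw [if_pos ⟨halk, hj'⟩]
          rw [stK_succ, heq]
    · have heq : stK s (k+1) = stK s k := by rw [stK_succ, psStep_of_empty hav]
      have hcard : (availS (stK s k)).card = 0 := by
        rw [Finset.not_nonempty_iff_eq_empty] at hav
        rw [hav, Finset.card_empty]
      refine ⟨?_, ?_, ?_, ?_, ?_, ?_, ?_, ?_⟩ <;> rw [heq]
      · exact ih.rem_nonneg
      · exact ih.rem_le_one
      · exact ih.sum_rem
      · exact ih.time_nonneg
      · exact ih.sum_cons
      · exact ih.fin_alive
      · omega
      · intro j hj
        obtain ⟨m, hm1, hm2, hm3, hm4⟩ := ih.deaths j hj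
        exact ⟨m, Nat.lt_succ_of_lt hm1, hm2, hm3, hm4⟩

theorem all_dead (s : Fin n → (Fin n ≃ Fin n)) (j : Fin n) : (stK s n).rem j = 0 := by
  have h := (master s n).avail_card
  have h2 : availS (stK s n) = ∅ := by
    rw [← Finset.card_eq_zero]; omega
  have h3 : j ∉ availS (stK s n) := by rw [h2]; exact Finset.notMem_empty j
  have h4 : ¬ (0 < (stK s n).rem j) := by simpa [availS] using h3
  linarith [(master s n).rem_nonneg j]

theorem time_le_one (s : Fin n → (Fin n ≃ Fin n)) (hn : 0 < n) (k : ℕ) :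
    (stK s k).time ≤ 1 := by
  have h1 := (master s k).sum_rem
  have h2 : 0 ≤ ∑ j, (stK s k).rem j := Finset.sum_nonneg fun j _ => (master s k).rem_nonneg j
  rw [h1] at h2
  have hn' : (0:ℝ) < n := by exact_mod_cast hn
  nlinarith

theorem final_time (s : Fin n → (Fin n ≃ Fin n)) (hn : 0 < n) : (stK s n).time = 1 := by
  have h1 := (master s n).sum_rem
  have h2 : ∑ j, (stK s n).rem j = 0 := by
    apply Finset.sum_eq_zero; intro j _; exact all_dead s j
  rw [h2] at h1
  have hn' : (0:ℝ) < n := by exact_mod_cast hn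
  rcases mul_eq_zero.mp h1.symm with h | h
  · exact absurd h (by positivity)
  · linarith

theorem psTime_eq (s : Fin n → (Fin n ≃ Fin n)) (j : Fin n) :
    psTime s j = (stK s n).fin j := rfl

theorem fin_eq_final (s : Fin n → (Fin n ≃ Fin n)) {k : ℕ} {j : Fin n}
    (hdead : (stK s k).rem j = 0) : (stK s n).fin j = (stK s k).fin j := by
  rcases le_total k n with h | h
  · exact (dead_chain s h hdead).2
  · exact ((dead_chain s h (all_dead s j)).2).symm

theorem alive_iff (s : Fin n → (Fin n ≃ Fin n)) (k : ℕ) (j : Fin n) :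
    0 < (stK s k).rem j ↔ (stK s k).time < psTime s j := by
  constructor
  · intro hal
    obtain ⟨m, hm1, hm2, hm3, hm4⟩ := (master s n).deaths j (all_dead s j)
    have hkm : k ≤ m := by
      by_contra hc
      push_neg at hc
      have : m + 1 ≤ k := hc
      have := (dead_chain s this hm3).1
      linarith
    have h1 : (stK s k).time ≤ (stK s m).time := time_mono s hkm
    have h2 : (stK s m).time < (stK s (m+1)).time := by
      rw [stK_succ]
      exact step_time_lt ⟨j, by simpa [availS] using hm2⟩
    rw [psTime_eq, hm4]
    linarith
  · intro ht
    by_contra hc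
    push_neg at hc
    have hdead : (stK s k).rem j = 0 := le_antisymm hc ((master s k).rem_nonneg j)
    obtain ⟨m, hm1, hm2, hm3, hm4⟩ := (master s k).deaths j hdead
    have h1 : (stK s (m+1)).time ≤ (stK s k).time := time_mono s hm1
    have h2 : psTime s j = (stK s k).fin j := by
      rw [psTime_eq]; exact fin_eq_final s hdead
    rw [h2, hm4] at ht
    linarith

theorem alive_ge (s : Fin n → (Fin n ≃ Fin n)) {k : ℕ} {j : Fin n}
    (hal : 0 < (stK s k).rem j) : (stK s (k+1)).time ≤ psTime s j := by
  by_cases h : 0 < (stK s (k+1)).rem j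
  · exact le_of_lt ((alive_iff s (k+1) j).1 h)
  · have hdead : (stK s (k+1)).rem j = 0 :=
      le_antisymm (not_lt.1 h) ((master s (k+1)).rem_nonneg j)
    obtain ⟨m, hm1, hm2, hm3, hm4⟩ := (master s (k+1)).deaths j hdead
    have hmk : m = k := by
      by_contra hc
      have hmlt : m + 1 ≤ k := by omega
      have := (dead_chain s hmlt hm3).1
      linarith
    rw [hmk] at hm4
    have h5 : psTime s j = (stK s (k+1)).fin j := by
      rw [psTime_eq]; exact fin_eq_final s hdead
    rw [h5, hm4]

theorem psTime_pos (s : Fin n → (Fin n ≃ Fin n)) (j : Fin n) : 0 < psTime s j := by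
  have h0 : 0 < (stK s 0).rem j := by rw [stK_zero]; exact zero_lt_one
  have := (alive_iff s 0 j).1 h0
  rw [stK_zero] at this
  exact this

theorem psTime_le_one (s : Fin n → (Fin n ≃ Fin n)) (hn : 0 < n) (j : Fin n) :
    psTime s j ≤ 1 := by
  obtain ⟨m, hm1, hm2, hm3, hm4⟩ := (master s n).deaths j (all_dead s j)
  rw [psTime_eq, hm4]
  calc (stK s (m+1)).time ≤ (stK s n).time := time_mono s hm1
    _ ≤ 1 := time_le_one s hn n

theorem card_dead_le (s : Fin n → (Fin n ≃ Fin n)) (k : ℕ) :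
    ((Finset.univ.filter (fun j => (stK s k).rem j = 0)).card : ℝ) ≤ n * (stK s k).time := by
  have h1 : ((Finset.univ.filter (fun j => (stK s k).rem j = 0)).card : ℝ)
      = ∑ j ∈ Finset.univ.filter (fun j => (stK s k).rem j = 0), (1 - (stK s k).rem j) :=
    calc ((Finset.univ.filter (fun j => (stK s k).rem j = 0)).card : ℝ)
        = ∑ _j ∈ Finset.univ.filter (fun j => (stK s k).rem j = 0), (1:ℝ) := by
          rw [Finset.sum_const, nsmul_eq_mul, mul_one]
      _ = ∑ j ∈ Finset.univ.filter (fun j => (stK s k).rem j = 0), (1 - (stK s k).rem j) :=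
          Finset.sum_congr rfl (fun j hj => by rw [(Finset.mem_filter.1 hj).2]; ring)
  rw [h1]
  calc ∑ j ∈ Finset.univ.filter (fun j => (stK s k).rem j = 0), (1 - (stK s k).rem j)
      ≤ ∑ j, (1 - (stK s k).rem j) := by
        apply Finset.sum_le_sum_of_subset_of_nonneg (Finset.filter_subset _ _)
        intro j _ _
        linarith [(master s k).rem_le_one j]
    _ = n - ∑ j, (stK s k).rem j := by
        rw [Finset.sum_sub_distrib]; simp
    _ = n * (stK s k).time := by rw [(master s k).sum_rem]; ring

theorem card_psTime_le (s : Fin n → (Fin n ≃ Fin n)) {t : ℝ} (ht : 0 ≤ t) :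
    ((Finset.univ.filter (fun j => psTime s j ≤ t)).card : ℝ) ≤ n * t := by
  classical
  set K := (Finset.range (n+1)).filter (fun k => (stK s k).time ≤ t) with hK
  have hKne : K.Nonempty := ⟨0, by simp [hK, stK_zero, ht]⟩
  set kstar := K.max' hKne with hkstar
  have hkK : kstar ∈ K := Finset.max'_mem _ _
  have hkt : (stK s kstar).time ≤ t := (Finset.mem_filter.1 hkK).2
  have hsub : Finset.univ.filter (fun j => psTime s j ≤ t) ⊆
      Finset.univ.filter (fun j => (stK s kstar).rem j = 0) := by
    intro j hj
    have hjt : psTime s j ≤ t := (Finset.mem_filter.1 hj).2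
    obtain ⟨m, hm1, hm2, hm3, hm4⟩ := (master s n).deaths j (all_dead s j)
    have hmt : (stK s (m+1)).time ≤ t := by
      rw [psTime_eq, hm4] at hjt; exact hjt
    have hmK : m + 1 ∈ K := by
      refine Finset.mem_filter.2 ⟨?_, hmt⟩
      rw [Finset.mem_range]; omega
    have hmle : m + 1 ≤ kstar := Finset.le_max' _ _ hmK
    refine Finset.mem_filter.2 ⟨Finset.mem_univ j, (dead_chain s hmle hm3).1⟩
  calc ((Finset.univ.filter (fun j => psTime s j ≤ t)).card : ℝ)
      ≤ ((Finset.univ.filter (fun j => (stK s kstar).rem j = 0)).card : ℝ) := by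
        exact_mod_cast Finset.card_le_card hsub
    _ ≤ n * (stK s kstar).time := card_dead_le s kstar
    _ ≤ n * t := by
        apply mul_le_mul_of_nonneg_left hkt (by positivity)

theorem card_psTime_lt (s : Fin n → (Fin n ≃ Fin n)) {t : ℝ} (ht : 0 ≤ t) :
    ((Finset.univ.filter (fun j => psTime s j < t)).card : ℝ) ≤ n * t := by
  classical
  by_cases hne : (Finset.univ.filter (fun j => psTime s j < t)).Nonempty
  · obtain ⟨j0, hj0⟩ := hne
    set F := Finset.univ.filter (fun j => psTime s j < t) with hF
    obtain ⟨j1, hj1F, hj1⟩ := Finset.exists_mem_eq_sup' ⟨j0, hj0⟩ (fun j => psTime s j)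
    have hsub : F ⊆ Finset.univ.filter (fun j => psTime s j ≤ psTime s j1) := by
      intro x hx
      refine Finset.mem_filter.2 ⟨Finset.mem_univ x, ?_⟩
      rw [← hj1]
      exact Finset.le_sup' _ hx
    calc (F.card : ℝ) ≤ ((Finset.univ.filter
          (fun j => psTime s j ≤ psTime s j1)).card : ℝ) := by
          exact_mod_cast Finset.card_le_card hsub
      _ ≤ n * psTime s j1 := card_psTime_le s (le_of_lt (psTime_pos s j1))
      _ ≤ n * t := by
          have : psTime s j1 < t := (Finset.mem_filter.1 hj1F).2
          apply mul_le_mul_of_nonneg_left (le_of_lt this) (by positivity)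
  · rw [Finset.not_nonempty_iff_eq_empty] at hne
    rw [hne]
    simp
    positivity

/-- the "arrival time" of agent `m` at item `j`: the (0-extended) maximum of the finishing
times of the items that `m` ranks strictly before `j`. -/
noncomputable def Aval (s : Fin n → (Fin n ≃ Fin n)) (m j : Fin n) : ℝ :=
  (insert 0 ((Finset.univ.filter (fun k => (s m).symm k < (s m).symm j)).image
    (psTime s))).max' (Finset.insert_nonempty _ _)

theorem Aval_nonneg (s : Fin n → (Fin n ≃ Fin n)) (m j : Fin n) : 0 ≤ Aval s m j :=
  Finset.le_max' _ _ (Finset.mem_insert_self _ _)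

theorem le_Aval (s : Fin n → (Fin n ≃ Fin n)) {m j k : Fin n}
    (hk : (s m).symm k < (s m).symm j) : psTime s k ≤ Aval s m j :=
  Finset.le_max' _ _ (Finset.mem_insert_of_mem (Finset.mem_image_of_mem _ (by simp [hk])))

theorem Aval_le (s : Fin n → (Fin n ≃ Fin n)) {m j : Fin n} {c : ℝ} (hc : 0 ≤ c)
    (h : ∀ k, (s m).symm k < (s m).symm j → psTime s k ≤ c) : Aval s m j ≤ c := by
  apply Finset.max'_le
  intro y hy
  rcases Finset.mem_insert.1 hy with rfl | hy
  · exact hc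
  · obtain ⟨k, hk, rfl⟩ := Finset.mem_image.1 hy
    exact h k (by simpa using hk)

theorem Aval_cases (s : Fin n → (Fin n ≃ Fin n)) (m j : Fin n) :
    Aval s m j = 0 ∨ ∃ k, (s m).symm k < (s m).symm j ∧ Aval s m j = psTime s k := by
  have := Finset.max'_mem _ (Finset.insert_nonempty (0:ℝ)
    ((Finset.univ.filter (fun k => (s m).symm k < (s m).symm j)).image (psTime s)))
  rcases Finset.mem_insert.1 this with h | h
  · exact Or.inl h
  · obtain ⟨k, hk, hke⟩ := Finset.mem_image.1 h
    exact Or.inr ⟨k, by simpa using hk, hke.symm⟩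

theorem Aval_le_one (s : Fin n → (Fin n ≃ Fin n)) (hn : 0 < n) (m j : Fin n) :
    Aval s m j ≤ 1 :=
  Aval_le s zero_le_one (fun k _ => psTime_le_one s hn k)

/-- The bridge invariant: the amount of item `j` consumed by agent `m` up to phase `k` is
determined by the finishing times. -/
theorem bridge_inv (s : Fin n → (Fin n ≃ Fin n)) : ∀ (k : ℕ) (m j : Fin n),
    (stK s k).cons m j = max 0 (min (stK s k).time (psTime s j)
      - min (stK s k).time (Aval s m j)) := by
  intro k
  induction k with
  | zero =>
    intro m j
    rw [stK_zero]
    simp only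
    rw [min_eq_left (le_of_lt (psTime_pos s j)), min_eq_left (Aval_nonneg s m j)]
    simp
  | succ k ih =>
    intro m j
    by_cases hav : (availS (stK s k)).Nonempty
    · obtain ⟨top, Δ, hmem, hmin, hΔ, hle, hatt, heq⟩ := psStep_spec s (stK s k) hav
      set t := (stK s k).time with hts
      have htt' : (stK s (k+1)).time = t + Δ := by rw [stK_succ, heq]
      have ht0 : 0 ≤ t := (master s k).time_nonneg
      -- characterization of (top m = j)
      have htopj : top m = j ↔ ((stK s k).time < psTime s j ∧ Aval s m j ≤ t) := by
        constructor
        · intro he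
          have hjav : j ∈ availS (stK s k) := he ▸ hmem m
          have hjal : 0 < (stK s k).rem j := by simpa [availS] using hjav
          refine ⟨(alive_iff s k j).1 hjal, ?_⟩
          apply Aval_le s ht0
          intro k' hk'
          by_contra hc
          push_neg at hc
          have hk'al : 0 < (stK s k).rem k' := (alive_iff s k k').2 hc
          have hk'av : k' ∈ availS (stK s k) := by simpa [availS] using hk'al
          have := hmin m k' hk'av
          rw [he] at this
          omega
        · rintro ⟨h1, h2⟩
          have hjal : 0 < (stK s k).rem j := (alive_iff s k j).2 h1
          have hjav : j ∈ availS (stK s k) := by simpa [availS] using hjal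
          have hrk : (s m).symm (top m) ≤ (s m).symm j := hmin m j hjav
          rcases lt_or_eq_of_le hrk with hlt | heqr
          · exfalso
            have h3 : psTime s (top m) ≤ Aval s m j := le_Aval s hlt
            have h4 : 0 < (stK s k).rem (top m) := by simpa [availS] using hmem m
            have h5 := (alive_iff s k (top m)).1 h4
            rw [← hts] at h5
            linarith
          · exact (s m).symm.injective heqr
      have hconseq : (stK s (k+1)).cons m j
          = (stK s k).cons m j + (if top m = j then Δ else 0) := by rw [stK_succ, heq]
      by_cases hT : t < psTime s j
      · have hjal : 0 < (stK s k).rem j := (alive_iff s k j).2 (lt_of_le_of_lt (le_of_eq hts.symm) hT)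
        have hTge : t + Δ ≤ psTime s j := by
          have := alive_ge s hjal
          rw [htt'] at this
          exact this
        by_cases hA : Aval s m j ≤ t
        · rw [hconseq, if_pos (htopj.2 ⟨lt_of_le_of_lt (le_of_eq hts.symm) hT, hA⟩), ih m j, htt']
          rw [min_eq_left (le_of_lt hT), min_eq_right hA,
            min_eq_left hTge, min_eq_right (by linarith : Aval s m j ≤ t + Δ)]
          rw [max_eq_right (by linarith), max_eq_right (by linarith)]
          ring
        · push_neg at hA
          have hAge : t + Δ ≤ Aval s m j := by
            rcases Aval_cases s m j with h0 | ⟨k', hk', hke⟩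
            · rw [h0] at hA; linarith
            · rw [hke] at hA ⊢
              have : 0 < (stK s k).rem k' := (alive_iff s k k').2 (lt_of_le_of_lt (le_of_eq hts.symm) hA)
              have := alive_ge s this
              rw [htt'] at this
              exact this
          rw [hconseq, if_neg (fun hc => by
            have := (htopj.1 hc).2; linarith), ih m j, htt']
          rw [min_eq_left (le_of_lt hT), min_eq_left (le_of_lt hA),
            min_eq_left hTge, min_eq_left hAge]
          simp
      · push_neg at hT
        have htop : top m ≠ j := by
          intro hc
          have := (htopj.1 hc).1
          rw [← hts] at this
          linarith
        rw [hconseq, if_neg htop, ih m j, htt']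
        rw [min_eq_right hT, min_eq_right (by linarith : psTime s j ≤ t + Δ)]
        rw [add_zero]
        rcases le_total (Aval s m j) (psTime s j) with hAT | hAT
        · rw [min_eq_right (le_trans hAT hT),
            min_eq_right (by linarith : Aval s m j ≤ t + Δ)]
        · have h1 : psTime s j ≤ min t (Aval s m j) := le_min hT hAT
          have h2 : psTime s j ≤ min (t + Δ) (Aval s m j) := le_min (by linarith) hAT
          rw [max_eq_left (by linarith), max_eq_left (by linarith)]
    · have heq : stK s (k+1) = stK s k := by rw [stK_succ, psStep_of_empty hav]
      rw [heq]
      exact ih m j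

/-- Closed form for the Probabilistic Serial allocation probabilities. -/
theorem psProb_closed (s : Fin n → (Fin n ≃ Fin n)) (hn : 0 < n) (m j : Fin n) :
    psProb s m j = max 0 (psTime s j - Aval s m j) := by
  have h := bridge_inv s n m j
  rw [final_time s hn] at h
  rw [min_eq_right (psTime_le_one s hn j), min_eq_right (Aval_le_one s hn m j)] at h
  exact h

theorem psProb_nonneg (s : Fin n → (Fin n ≃ Fin n)) (hn : 0 < n) (m j : Fin n) :
    0 ≤ psProb s m j := by
  rw [psProb_closed s hn]
  exact le_max_left _ _

theorem psProb_le_time (s : Fin n → (Fin n ≃ Fin n)) (hn : 0 < n) (m j : Fin n) :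
    psProb s m j ≤ psTime s j := by
  rw [psProb_closed s hn]
  rw [max_le_iff]
  exact ⟨le_of_lt (psTime_pos s j), by linarith [Aval_nonneg s m j]⟩

theorem sum_psProb_item (s : Fin n → (Fin n ≃ Fin n)) (hn : 0 < n) (j : Fin n) :
    ∑ m, psProb s m j = 1 := by
  have h := (master s n).sum_cons j
  rw [all_dead s j] at h
  simpa [psProb, psFinal_eq_stK] using h

/-- The factor-2 lemma: a unilateral deviation at most halves any item's finishing time. -/
theorem factor2 (hn : 0 < n) (s : Fin n → (Fin n ≃ Fin n)) (i : Fin n) (σ : Fin n ≃ Fin n) :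
    ∀ j, psTime s j ≤ 2 * psTime (Function.update s i σ) j := by
  classical
  set s' := Function.update s i σ with hs'
  suffices H : ∀ (N : ℕ) (j : Fin n),
      (Finset.univ.filter (fun k => psTime s' k < psTime s' j)).card = N →
      psTime s j ≤ 2 * psTime s' j by
    intro j; exact H _ j rfl
  intro N
  induction N using Nat.strong_induction_on with
  | _ N IH =>
    intro j hcard
    by_contra hcon
    push_neg at hcon
    have IH' : ∀ k, psTime s' k < psTime s' j → psTime s k ≤ 2 * psTime s' k := by
      intro k hk
      refine IH _ ?_ k rfl
      rw [← hcard]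
      apply Finset.card_lt_card
      rw [Finset.ssubset_iff_of_subset]
      · exact ⟨k, Finset.mem_filter.2 ⟨Finset.mem_univ k, hk⟩,
          fun hc => lt_irrefl _ (Finset.mem_filter.1 hc).2⟩
      · intro x hx
        refine Finset.mem_filter.2 ⟨Finset.mem_univ x, lt_trans (Finset.mem_filter.1 hx).2 hk⟩
    have hkey : ∀ m, m ≠ i → psProb s' m j ≤ (1/2) * psProb s m j := by
      intro m hm
      have hsymm : (s' m).symm = (s m).symm := by rw [hs', Function.update_of_ne hm]
      by_cases hA' : psTime s' j ≤ Aval s' m j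
      · rw [psProb_closed s' hn, max_eq_left (by linarith)]
        have := psProb_nonneg s hn m j
        linarith
      · push_neg at hA'
        have hA2 : Aval s m j ≤ 2 * Aval s' m j := by
          apply Aval_le s (by linarith [Aval_nonneg s' m j])
          intro k hk
          have hk' : (s' m).symm k < (s' m).symm j := by rw [hsymm]; exact hk
          have h1 : psTime s' k ≤ Aval s' m j := le_Aval s' hk'
          have h2 : psTime s k ≤ 2 * psTime s' k := IH' k (lt_of_le_of_lt h1 hA')
          linarith
        rw [psProb_closed s' hn, psProb_closed s hn]
        rw [max_eq_right (by linarith : (0:ℝ) ≤ psTime s' j - Aval s' m j),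
          max_eq_right (by linarith : (0:ℝ) ≤ psTime s j - Aval s m j)]
        linarith
    have hsum' : ∑ m, psProb s' m j = 1 := sum_psProb_item s' hn j
    have hsplit : psProb s' i j + ∑ m ∈ Finset.univ.erase i, psProb s' m j = 1 :=
      (Finset.add_sum_erase Finset.univ (fun m => psProb s' m j) (Finset.mem_univ i)).trans hsum'
    have h2 : ∑ m ∈ Finset.univ.erase i, psProb s' m j
        ≤ (1/2) * ∑ m ∈ Finset.univ.erase i, psProb s m j := by
      rw [Finset.mul_sum]
      apply Finset.sum_le_sum
      intro m hm
      exact hkey m (Finset.ne_of_mem_erase hm)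
    have h3 : ∑ m ∈ Finset.univ.erase i, psProb s m j ≤ 1 := by
      rw [← sum_psProb_item s hn j]
      apply Finset.sum_le_sum_of_subset_of_nonneg (Finset.erase_subset _ _)
      intro m _ _
      exact psProb_nonneg s hn m j
    have h4 : psProb s' i j ≤ psTime s' j := psProb_le_time s' hn i j
    have h5 : psTime s j ≤ 1 := psTime_le_one s hn j
    linarith

/-- Agent `i` consumes, within the items she ranks at least as high as `j`, a total
amount of at least the finishing time of `j`. -/
theorem eat_prefix (hn : 0 < n) (s : Fin n → (Fin n ≃ Fin n)) (i : Fin n) :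
    ∀ (j : Fin n), psTime s j ≤
      ∑ k ∈ Finset.univ.filter (fun k => (s i).symm k ≤ (s i).symm j), psProb s i k := by
  classical
  suffices H : ∀ (N : ℕ) (j : Fin n), ((s i).symm j : ℕ) = N → psTime s j ≤
      ∑ k ∈ Finset.univ.filter (fun k => (s i).symm k ≤ (s i).symm j), psProb s i k by
    intro j; exact H _ j rfl
  intro N
  induction N using Nat.strong_induction_on with
  | _ N IH =>
    intro j hN
    have hpj : psTime s j - Aval s i j ≤ psProb s i j := by
      rw [psProb_closed s hn]; exact le_max_right _ _
    have hmemj : j ∈ Finset.univ.filter (fun k => (s i).symm k ≤ (s i).symm j) := by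
      simp
    rcases Aval_cases s i j with h0 | ⟨k1, hk1, hAeq⟩
    · calc psTime s j = psTime s j - Aval s i j := by rw [h0]; ring
        _ ≤ psProb s i j := hpj
        _ ≤ ∑ k ∈ Finset.univ.filter (fun k => (s i).symm k ≤ (s i).symm j), psProb s i k :=
          Finset.single_le_sum (fun k _ => psProb_nonneg s hn i k) hmemj
    · have hIH : psTime s k1 ≤
          ∑ k ∈ Finset.univ.filter (fun k => (s i).symm k ≤ (s i).symm k1), psProb s i k := by
        refine IH ((s i).symm k1 : ℕ) ?_ k1 rfl
        rw [← hN]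
        exact hk1
      have hsplit : ∑ k ∈ Finset.univ.filter (fun k => (s i).symm k ≤ (s i).symm j), psProb s i k
          = psProb s i j + ∑ k ∈ (Finset.univ.filter
            (fun k => (s i).symm k ≤ (s i).symm j)).erase j, psProb s i k :=
        (Finset.add_sum_erase _ (fun k => psProb s i k) hmemj).symm
      have hsub : Finset.univ.filter (fun k => (s i).symm k ≤ (s i).symm k1) ⊆
          (Finset.univ.filter (fun k => (s i).symm k ≤ (s i).symm j)).erase j := by
        intro x hx
        have hx' : (s i).symm x ≤ (s i).symm k1 := (Finset.mem_filter.1 hx).2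
        refine Finset.mem_erase.2 ⟨?_, Finset.mem_filter.2 ⟨Finset.mem_univ x,
          le_of_lt (lt_of_le_of_lt hx' hk1)⟩⟩
        rintro rfl
        exact absurd (lt_of_le_of_lt hx' hk1) (lt_irrefl _)
      have h2 : ∑ k ∈ Finset.univ.filter (fun k => (s i).symm k ≤ (s i).symm k1), psProb s i k
          ≤ ∑ k ∈ (Finset.univ.filter
            (fun k => (s i).symm k ≤ (s i).symm j)).erase j, psProb s i k :=
        Finset.sum_le_sum_of_subset_of_nonneg hsub (fun k _ _ => psProb_nonneg s hn i k)
      rw [hsplit]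
      have : psTime s j - psTime s k1 ≤ psProb s i j := by rw [← hAeq]; exact hpj
      linarith

/-- If agent `i`'s report ranks items in order of non-increasing value, her utility is at
least `v j0` times the finishing time of `j0`, for every item `j0`. -/
theorem truthful_value_bound (hn : 0 < n) (s : Fin n → (Fin n ≃ Fin n)) (i : Fin n)
    (v : Fin n → ℝ) (hv0 : ∀ j, 0 ≤ v j)
    (hmono : ∀ r r' : Fin n, r ≤ r' → v (s i r') ≤ v (s i r)) (j0 : Fin n) :
    v j0 * psTime s j0 ≤ ∑ j, psProb s i j * v j := by
  classical
  have h1 : ∑ j ∈ Finset.univ.filter (fun k => (s i).symm k ≤ (s i).symm j0),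
      psProb s i j * v j ≤ ∑ j, psProb s i j * v j := by
    apply Finset.sum_le_sum_of_subset_of_nonneg (Finset.filter_subset _ _)
    intro j _ _
    exact mul_nonneg (psProb_nonneg s hn i j) (hv0 j)
  have h2 : ∀ j ∈ Finset.univ.filter (fun k => (s i).symm k ≤ (s i).symm j0),
      psProb s i j * v j0 ≤ psProb s i j * v j := by
    intro j hj
    have hrank : (s i).symm j ≤ (s i).symm j0 := (Finset.mem_filter.1 hj).2
    have := hmono _ _ hrank
    rw [Equiv.apply_symm_apply, Equiv.apply_symm_apply] at this
    exact mul_le_mul_of_nonneg_left this (psProb_nonneg s hn i j)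
  calc v j0 * psTime s j0
      ≤ v j0 * ∑ j ∈ Finset.univ.filter (fun k => (s i).symm k ≤ (s i).symm j0),
          psProb s i j := mul_le_mul_of_nonneg_left (eat_prefix hn s i j0) (hv0 j0)
    _ = ∑ j ∈ Finset.univ.filter (fun k => (s i).symm k ≤ (s i).symm j0),
          psProb s i j * v j0 := by
            rw [Finset.mul_sum]
            exact Finset.sum_congr rfl (fun j _ => mul_comm _ _)
    _ ≤ ∑ j ∈ Finset.univ.filter (fun k => (s i).symm k ≤ (s i).symm j0),
          psProb s i j * v j := Finset.sum_le_sum h2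
    _ ≤ ∑ j, psProb s i j * v j := h1

/-- Abel-summation bound: if `g` is a nonincreasing nonnegative sequence and the prefix
sums of `a` dominate those of the constant `c`, then `∑ g * a` dominates `c * ∑ g`. -/
theorem abel_bound (g a : ℕ → ℝ) (c : ℝ) (N : ℕ)
    (hganti : ∀ k, g (k+1) ≤ g k) (hg0 : ∀ k, 0 ≤ g k)
    (hpre : ∀ K, K ≤ N → c * K ≤ ∑ k ∈ Finset.range K, a k) :
    c * ∑ k ∈ Finset.range N, g k ≤ ∑ k ∈ Finset.range N, g k * a k := by
  rcases Nat.eq_zero_or_pos N with rfl | hN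
  · simp
  have key : (0:ℝ) ≤ ∑ k ∈ Finset.range N, g k • (a k - c) := by
    rw [Finset.sum_range_by_parts g (fun k => a k - c) N]
    have hSB : ∀ K, K ≤ N → 0 ≤ ∑ j ∈ Finset.range K, (a j - c) := by
      intro K hK
      rw [Finset.sum_sub_distrib, Finset.sum_const, Finset.card_range, nsmul_eq_mul]
      have := hpre K hK
      linarith [this]
    have h1 : (0:ℝ) ≤ g (N-1) • ∑ j ∈ Finset.range N, (a j - c) :=
      smul_nonneg (hg0 _) (hSB N (le_refl N))
    have h2 : ∑ i ∈ Finset.range (N-1), (g (i+1) - g i) • ∑ j ∈ Finset.range (i+1), (a j - c)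
        ≤ 0 := by
      apply Finset.sum_nonpos
      intro i hi
      have hiN : i + 1 ≤ N := by
        have := Finset.mem_range.1 hi; omega
      have := hSB (i+1) hiN
      have hgi : g (i+1) - g i ≤ 0 := by linarith [hganti i]
      rw [smul_eq_mul]
      exact mul_nonpos_of_nonpos_of_nonneg hgi this
    linarith
  have : ∑ k ∈ Finset.range N, g k • (a k - c)
      = ∑ k ∈ Finset.range N, g k * a k - c * ∑ k ∈ Finset.range N, g k := by
    rw [Finset.mul_sum, ← Finset.sum_sub_distrib]
    apply Finset.sum_congr rfl
    intro k _
    simp [smul_eq_mul]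
    ring
  linarith [this ▸ key]

/-- If agent `i`'s report ranks items in order of non-increasing value, her utility is at
least the average value `(1/n) * ∑ v`. -/
theorem truthful_avg_bound (hn : 0 < n) (s : Fin n → (Fin n ≃ Fin n)) (i : Fin n)
    (v : Fin n → ℝ) (hv0 : ∀ j, 0 ≤ v j)
    (hmono : ∀ r r' : Fin n, r ≤ r' → v (s i r') ≤ v (s i r)) :
    (1 / n) * ∑ j, v j ≤ ∑ j, psProb s i j * v j := by
  classical
  set σ := s i with hσ
  set aN : ℕ → ℝ := fun r => if h : r < n then psProb s i (σ ⟨r, h⟩) else 0 with haN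
  set gN : ℕ → ℝ := fun r => if h : r < n then v (σ ⟨r, h⟩) else 0 with hgN
  have hsum1 : ∑ j, psProb s i j * v j = ∑ r ∈ Finset.range n, gN r * aN r := by
    rw [← Equiv.sum_comp σ (fun j => psProb s i j * v j)]
    rw [← Fin.sum_univ_eq_sum_range (fun r => gN r * aN r) n]
    apply Finset.sum_congr rfl
    intro r _
    simp only [haN, hgN, dif_pos r.isLt, Fin.eta]
    ring
  have hsum2 : ∑ j, v j = ∑ r ∈ Finset.range n, gN r := by
    rw [← Equiv.sum_comp σ v, ← Fin.sum_univ_eq_sum_range gN n]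
    apply Finset.sum_congr rfl
    intro r _
    simp only [hgN, dif_pos r.isLt, Fin.eta]
  have hganti : ∀ k, gN (k+1) ≤ gN k := by
    intro k
    by_cases h1 : k + 1 < n
    · have h0 : k < n := by omega
      simp only [hgN, dif_pos h1, dif_pos h0]
      exact hmono ⟨k, h0⟩ ⟨k+1, h1⟩ (by simp [Fin.le_def])
    · by_cases h0 : k < n
      · simp only [hgN, dif_neg h1, dif_pos h0]
        exact hv0 _
      · simp only [hgN, dif_neg h1, dif_neg h0]
        exact le_refl 0
  have hg0 : ∀ k, 0 ≤ gN k := by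
    intro k
    by_cases h0 : k < n
    · simp only [hgN, dif_pos h0]; exact hv0 _
    · simp only [hgN, dif_neg h0]
      exact le_refl 0
  have hpre : ∀ K, K ≤ n → (1/n : ℝ) * K ≤ ∑ k ∈ Finset.range K, aN k := by
    intro K hK
    rcases Nat.eq_zero_or_pos K with rfl | hK1
    · simp
    set FK := Finset.univ.filter (fun k : Fin n => ((σ.symm k : Fin n) : ℕ) < K) with hFK
    have hstepA : ∑ r ∈ Finset.range K, aN r = ∑ k ∈ FK, psProb s i k := by
      apply Finset.sum_bij (i := fun (r : ℕ) (hr : r ∈ Finset.range K) =>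
        σ ⟨r, lt_of_lt_of_le (Finset.mem_range.1 hr) hK⟩)
      · intro r hr
        refine Finset.mem_filter.2 ⟨Finset.mem_univ _, ?_⟩
        rw [Equiv.symm_apply_apply]
        exact Finset.mem_range.1 hr
      · intro r hr r' hr' heq
        have := σ.injective heq
        have := Fin.mk.injEq _ _ _ _ ▸ this
        simpa using this
      · intro k hk
        have hk' : ((σ.symm k : Fin n) : ℕ) < K := (Finset.mem_filter.1 hk).2
        refine ⟨((σ.symm k : Fin n) : ℕ), Finset.mem_range.2 hk', ?_⟩
        exact (congrArg σ (Fin.eta (σ.symm k) _)).trans (Equiv.apply_symm_apply σ k)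
      · intro r hr
        simp only [haN, dif_pos (lt_of_lt_of_le (Finset.mem_range.1 hr) hK)]
    have hFKcard : FK.card = K := by
      rw [hFK]
      rw [Finset.card_bij' (i := fun k _ => ((σ.symm k : Fin n) : ℕ))
        (j := fun (r : ℕ) (hr : r ∈ Finset.range K) =>
          σ ⟨r, lt_of_lt_of_le (Finset.mem_range.1 hr) hK⟩)
        (hi := fun k hk => Finset.mem_range.2 (Finset.mem_filter.1 hk).2)
        (hj := fun r hr => Finset.mem_filter.2 ⟨Finset.mem_univ _, by
          rw [Equiv.symm_apply_apply]; exact Finset.mem_range.1 hr⟩)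
        (left_inv := fun k hk =>
          (congrArg σ (Fin.eta (σ.symm k) _)).trans (Equiv.apply_symm_apply σ k))
        (right_inv := fun r hr => by simp)]
      exact Finset.card_range K
    have hFKne : FK.Nonempty := by
      rw [← Finset.card_pos, hFKcard]; exact hK1
    obtain ⟨jstar, hjF, hjeq⟩ := Finset.exists_mem_eq_sup' hFKne (psTime s)
    have hTmax : ∀ k ∈ FK, psTime s k ≤ psTime s jstar := by
      intro k hk
      rw [← hjeq]
      exact Finset.le_sup' _ hk
    have hcount : (K : ℝ) ≤ n * psTime s jstar := by
      have hsub : FK ⊆ Finset.univ.filter (fun k => psTime s k ≤ psTime s jstar) := by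
        intro k hk
        exact Finset.mem_filter.2 ⟨Finset.mem_univ _, hTmax k hk⟩
      have h1 : (K : ℝ) ≤ ((Finset.univ.filter
          (fun k => psTime s k ≤ psTime s jstar)).card : ℝ) := by
        rw [← hFKcard]
        exact_mod_cast Finset.card_le_card hsub
      exact le_trans h1 (card_psTime_le s (le_of_lt (psTime_pos s jstar)))
    have hstepC : psTime s jstar ≤ ∑ k ∈ FK, psProb s i k := by
      refine le_trans (eat_prefix hn s i jstar) ?_
      apply Finset.sum_le_sum_of_subset_of_nonneg
      · intro x hx
        have hx' : σ.symm x ≤ σ.symm jstar := (Finset.mem_filter.1 hx).2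
        have hj' : ((σ.symm jstar : Fin n) : ℕ) < K := (Finset.mem_filter.1 hjF).2
        refine Finset.mem_filter.2 ⟨Finset.mem_univ _, ?_⟩
        have : ((σ.symm x : Fin n) : ℕ) ≤ ((σ.symm jstar : Fin n) : ℕ) := hx'
        omega
      · intro k _ _
        exact psProb_nonneg s hn i k
    rw [hstepA]
    have hnpos : (0:ℝ) < n := by exact_mod_cast hn
    rw [div_mul_eq_mul_div, one_mul, div_le_iff₀ hnpos]
    calc (K:ℝ) ≤ n * psTime s jstar := hcount
      _ ≤ (∑ k ∈ FK, psProb s i k) * n := by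
          have := mul_le_mul_of_nonneg_left hstepC (le_of_lt hnpos)
          linarith
  rw [hsum1, hsum2]
  exact abel_bound gN aN (1/n) n hganti hg0 hpre

/-- the truthful report: items sorted by non-increasing value -/
noncomputable def truthOrder (v : Fin n → ℝ) : Fin n ≃ Fin n :=
  Tuple.sort (fun j => -v j)

theorem truthOrder_mono (v : Fin n → ℝ) :
    ∀ r r' : Fin n, r ≤ r' → v (truthOrder v r') ≤ v (truthOrder v r) := by
  intro r r' h
  have := Tuple.monotone_sort (fun j => -v j) h
  simp only [Function.comp_apply] at this
  rw [truthOrder]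
  linarith

/-- The key pointwise deviation bound: by reporting truthfully, agent `i` obtains at
least `1/n`, and at least half of `v j0` times the finishing time of any item `j0`
at the undeviated profile. -/
theorem dev_bound (hn : 0 < n) (sp : Fin n → (Fin n ≃ Fin n)) (i : Fin n)
    (v : Fin n → ℝ) (hv : UnitSum v) (j0 : Fin n) :
    max ((1:ℝ)/n) (v j0 * psTime sp j0 / 2) ≤
      ∑ j, psProb (Function.update sp i (truthOrder v)) i j * v j := by
  set sp' := Function.update sp i (truthOrder v) with hsp'
  have hup : sp' i = truthOrder v := Function.update_self i _ sp
  have hmono : ∀ r r' : Fin n, r ≤ r' → v (sp' i r') ≤ v (sp' i r) := by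
    rw [hup]; exact truthOrder_mono v
  apply max_le
  · have := truthful_avg_bound hn sp' i v hv.1 hmono
    rw [hv.2, mul_one] at this
    exact this
  · have h1 := truthful_value_bound hn sp' i v hv.1 hmono j0
    have h2 : psTime sp j0 ≤ 2 * psTime sp' j0 := factor2 hn sp i (truthOrder v) j0
    have h3 : v j0 * psTime sp j0 ≤ v j0 * (2 * psTime sp' j0) :=
      mul_le_mul_of_nonneg_left h2 (hv.1 j0)
    linarith

/-- an optimal matching -/
noncomputable def optPerm (u : Fin n → Fin n → ℝ) : Equiv.Perm (Fin n) :=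
  Classical.choose ((Finset.univ (α := Equiv.Perm (Fin n))).exists_mem_eq_sup'
    ⟨Equiv.refl (Fin n), Finset.mem_univ _⟩ (fun μ : Equiv.Perm (Fin n) => ∑ i, u i (μ i)))

theorem optPerm_spec (u : Fin n → Fin n → ℝ) : SWopt u = ∑ i, u i (optPerm u i) := by
  have := Classical.choose_spec ((Finset.univ (α := Equiv.Perm (Fin n))).exists_mem_eq_sup'
    ⟨Equiv.refl (Fin n), Finset.mem_univ _⟩ (fun μ : Equiv.Perm (Fin n) => ∑ i, u i (μ i)))
  exact this.2

/-- the pointwise assembly: the optimal welfare is at most `3√n` times the sum of the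
per-agent deviation guarantees. -/
theorem pointwise_opt (hn : 0 < n) (u : Fin n → Fin n → ℝ) (hu : ∀ i, UnitSum (u i))
    (sp : Fin n → (Fin n ≃ Fin n)) :
    SWopt u ≤ 3 * Real.sqrt n * ∑ i, max ((1:ℝ)/n)
      (u i (optPerm u i) * psTime sp (optPerm u i) / 2) := by
  classical
  set μ := optPerm u with hμ
  set M : Fin n → ℝ := fun i => max ((1:ℝ)/n)
    (u i (μ i) * psTime sp (μ i) / 2) with hM
  have hnR : (0:ℝ) < n := by exact_mod_cast hn
  set sq := Real.sqrt n with hsq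
  have hsqpos : 0 < sq := Real.sqrt_pos.2 hnR
  have hsqsq : sq * sq = n := Real.mul_self_sqrt (le_of_lt hnR)
  have hx01 : ∀ i, 0 ≤ u i (μ i) ∧ u i (μ i) ≤ 1 := by
    intro i
    refine ⟨(hu i).1 _, ?_⟩
    rw [← (hu i).2]
    exact Finset.single_le_sum (fun j _ => (hu i).1 j) (Finset.mem_univ _)
  have hM0 : ∀ i, (1:ℝ)/n ≤ M i := fun i => le_max_left _ _
  have hMnn : ∀ i, 0 ≤ M i := fun i => le_trans (by positivity) (hM0 i)
  have hMsum1 : 1 ≤ ∑ i, M i := by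
    calc (1:ℝ) = ∑ _i : Fin n, (1:ℝ)/n := by
          rw [Finset.sum_const, Finset.card_univ, Fintype.card_fin, nsmul_eq_mul]
          field_simp
      _ ≤ ∑ i, M i := Finset.sum_le_sum (fun i _ => hM0 i)
  set B := Finset.univ.filter (fun i : Fin n => 1/sq ≤ psTime sp (μ i)) with hB
  have hbig : ∑ i ∈ B, u i (μ i) ≤ 2 * sq * ∑ i, M i := by
    have h1 : ∀ i ∈ B, u i (μ i) ≤ 2 * sq * M i := by
      intro i hi
      have ht : 1/sq ≤ psTime sp (μ i) := (Finset.mem_filter.1 hi).2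
      have h2 : 1 ≤ sq * psTime sp (μ i) := by
        rw [div_le_iff₀ hsqpos] at ht
        linarith
      have hx := hx01 i
      calc u i (μ i) = u i (μ i) * 1 := by ring
        _ ≤ u i (μ i) * (sq * psTime sp (μ i)) :=
            mul_le_mul_of_nonneg_left h2 hx.1
        _ = 2 * sq * (u i (μ i) * psTime sp (μ i) / 2) := by ring
        _ ≤ 2 * sq * M i := by
            have : u i (μ i) * psTime sp (μ i) / 2 ≤ M i := le_max_right _ _
            nlinarith
    calc ∑ i ∈ B, u i (μ i) ≤ ∑ i ∈ B, 2 * sq * M i := Finset.sum_le_sum h1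
      _ = 2 * sq * ∑ i ∈ B, M i := by rw [Finset.mul_sum]
      _ ≤ 2 * sq * ∑ i, M i := by
          apply mul_le_mul_of_nonneg_left _ (by positivity)
          exact Finset.sum_le_sum_of_subset_of_nonneg (Finset.filter_subset _ _)
            (fun i _ _ => hMnn i)
  have hsmall : ∑ i ∈ Finset.univ.filter (fun i => ¬ (1/sq ≤ psTime sp (μ i))), u i (μ i)
      ≤ sq * ∑ i, M i := by
    set Bc := Finset.univ.filter (fun i : Fin n => ¬ (1/sq ≤ psTime sp (μ i))) with hBc
    have h1 : ∑ i ∈ Bc, u i (μ i) ≤ (Bc.card : ℝ) := by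
      calc ∑ i ∈ Bc, u i (μ i) ≤ ∑ _i ∈ Bc, (1:ℝ) :=
            Finset.sum_le_sum (fun i _ => (hx01 i).2)
        _ = (Bc.card : ℝ) := by rw [Finset.sum_const, nsmul_eq_mul, mul_one]
    have h2 : (Bc.card : ℝ) ≤ ((Finset.univ.filter
        (fun j => psTime sp j < 1/sq)).card : ℝ) := by
      have hinj : ∀ i ∈ Bc, μ i ∈ Finset.univ.filter (fun j => psTime sp j < 1/sq) := by
        intro i hi
        have := (Finset.mem_filter.1 hi).2
        push_neg at this
        exact Finset.mem_filter.2 ⟨Finset.mem_univ _, this⟩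
      exact_mod_cast Finset.card_le_card_of_injOn μ hinj
        (fun a _ b _ hab => μ.injective hab)
    have h3 : ((Finset.univ.filter (fun j => psTime sp j < 1/sq)).card : ℝ) ≤ n * (1/sq) :=
      card_psTime_lt sp (by positivity)
    have h4 : (n:ℝ) * (1/sq) = sq := by
      field_simp
      linarith [hsqsq]
    have h5 : sq ≤ sq * ∑ i, M i := by
      nlinarith
    linarith
  rw [optPerm_spec u, ← hμ]
  rw [← Finset.sum_filter_add_sum_filter_not Finset.univ
    (fun i : Fin n => 1/sq ≤ psTime sp (μ i)) (fun i => u i (μ i))]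
  rw [← hB]
  have : (3:ℝ) * sq * ∑ i, M i = 2 * sq * ∑ i, M i + sq * ∑ i, M i := by ring
  rw [this]
  exact add_le_add hbig hsmall

/-- decomposition of an expectation over the product distribution by the `i`-th coordinate -/
theorem decomp (S : Fin n → Finset (Fin n → ℝ)) (D : Fin n → (Fin n → ℝ) → ℝ) (i : Fin n)
    (f : (Fin n → (Fin n → ℝ)) → ℝ) :
    ∑ u ∈ Fintype.piFinset S, (∏ m, D m (u m)) * f u
    = ∑ v ∈ S i, D i v * ∑ u ∈ Fintype.piFinset (Function.update S i {v}),
        (∏ m ∈ Finset.univ.erase i, D m (u m)) * f u := by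
  classical
  have hfib := Finset.sum_fiberwise_of_maps_to (g := fun u : Fin n → Fin n → ℝ => u i)
    (t := S i) (fun u hu => (Fintype.mem_piFinset.1 hu) i)
    (fun u => (∏ m, D m (u m)) * f u)
  rw [← hfib]
  apply Finset.sum_congr rfl
  intro v hv
  have hset : (Fintype.piFinset S).filter (fun u => u i = v)
      = Fintype.piFinset (Function.update S i {v}) := by
    ext u
    simp only [Finset.mem_filter, Fintype.mem_piFinset]
    constructor
    · rintro ⟨h1, h2⟩ m
      by_cases hm : m = i
      · subst hm; rw [Function.update_self]; simp [h2]
      · rw [Function.update_of_ne hm]; exact h1 m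
    · intro h
      constructor
      · intro m
        by_cases hm : m = i
        · subst hm
          have := h m
          rw [Function.update_self, Finset.mem_singleton] at this
          rw [this]; exact hv
        · have := h m; rwa [Function.update_of_ne hm] at this
      · have := h i
        rw [Function.update_self, Finset.mem_singleton] at this
        exact this
  rw [hset, Finset.mul_sum]
  apply Finset.sum_congr rfl
  intro u hu
  have hui : u i = v := by
    have := Fintype.mem_piFinset.1 hu i
    rwa [Function.update_self, Finset.mem_singleton] at this
  rw [← Finset.mul_prod_erase Finset.univ (fun m => D m (u m)) (Finset.mem_univ i)]
  rw [hui]; ring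

theorem mem_piFinset_update {S : Fin n → Finset (Fin n → ℝ)} {i : Fin n}
    {v : Fin n → ℝ} (hv : v ∈ S i) {u : Fin n → Fin n → ℝ}
    (hu : u ∈ Fintype.piFinset (Function.update S i {v})) :
    u i = v ∧ ∀ m, u m ∈ S m := by
  have h := Fintype.mem_piFinset.1 hu
  have hui : u i = v := by
    have := h i
    rwa [Function.update_self, Finset.mem_singleton] at this
  refine ⟨hui, fun m => ?_⟩
  by_cases hm : m = i
  · subst hm; rw [hui]; exact hv
  · have := h m; rwa [Function.update_of_ne hm] at this

/-- The main estimate, with the explicit constant `3`. -/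
theorem main :
      ∀ (n : ℕ) (S : Fin n → Finset (Fin n → ℝ)) (D : Fin n → (Fin n → ℝ) → ℝ)
        (q : Fin n → (Fin n → ℝ) → (Fin n ≃ Fin n) → ℝ),
        (∀ i v, 0 ≤ D i v) →
        (∀ i, ∑ v ∈ S i, D i v = 1) →
        (∀ i, ∀ v ∈ S i, UnitSum v) →
        (∀ i, ∀ v ∈ S i, (∀ σ : Fin n ≃ Fin n, 0 ≤ q i v σ) ∧ ∑ σ, q i v σ = 1) →
        (∀ (i : Fin n), ∀ v ∈ S i, ∀ s' : Fin n ≃ Fin n,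
          ∑ u ∈ Fintype.piFinset (Function.update S i {v}),
            (∏ m ∈ Finset.univ.erase i, D m (u m)) *
              ∑ sp : Fin n → (Fin n ≃ Fin n),
                (∏ m, q m (u m) (sp m)) *
                  ∑ j, psProb (Function.update sp i s') i j * v j ≤
          ∑ u ∈ Fintype.piFinset (Function.update S i {v}),
            (∏ m ∈ Finset.univ.erase i, D m (u m)) *
              ∑ sp : Fin n → (Fin n ≃ Fin n),
                (∏ m, q m (u m) (sp m)) * ∑ j, psProb sp i j * v j) →
        (1 / ((3:ℝ) * Real.sqrt n)) *
            ∑ u ∈ Fintype.piFinset S, (∏ m, D m (u m)) * SWopt u ≤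
          ∑ u ∈ Fintype.piFinset S,
            (∏ m, D m (u m)) *
              ∑ sp : Fin n → (Fin n ≃ Fin n), (∏ m, q m (u m) (sp m)) * psSW u sp := by
  classical
  intro n S D q hD hDsum hSunit hq hBNE
  rcases Nat.eq_zero_or_pos n with rfl | hn
  · -- degenerate case `n = 0`
    have h1 : Real.sqrt ((0:ℕ):ℝ) = 0 := by norm_num
    rw [h1, mul_zero, div_zero, zero_mul]
    apply Finset.sum_nonneg
    intro u hu
    have hpsSW : ∀ sp : Fin 0 → (Fin 0 ≃ Fin 0), psSW u sp = 0 := by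
      intro sp; rw [psSW]; exact Finset.sum_of_isEmpty _
    have : ∑ sp : Fin 0 → (Fin 0 ≃ Fin 0), (∏ m, q m (u m) (sp m)) * psSW u sp = 0 := by
      apply Finset.sum_eq_zero
      intro sp _
      rw [hpsSW sp, mul_zero]
    rw [this, mul_zero]
  · -- main case
    have hnR : (0:ℝ) < n := by exact_mod_cast hn
    have hsqpos : 0 < Real.sqrt n := Real.sqrt_pos.2 hnR
    -- abbreviations
    set P : (Fin n → Fin n → ℝ) → ℝ := fun u => ∏ m, D m (u m) with hP
    set Q : (Fin n → Fin n → ℝ) → (Fin n → Fin n ≃ Fin n) → ℝ :=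
      fun u sp => ∏ m, q m (u m) (sp m) with hQ
    set Mi : Fin n → (Fin n → Fin n → ℝ) → (Fin n → Fin n ≃ Fin n) → ℝ :=
      fun i u sp => max ((1:ℝ)/n) (u i (optPerm u i) * psTime sp (optPerm u i) / 2) with hMi
    have hP0 : ∀ u, 0 ≤ P u := fun u => Finset.prod_nonneg (fun m _ => hD m (u m))
    have hQ0 : ∀ u, (∀ m, u m ∈ S m) → ∀ sp, 0 ≤ Q u sp := fun u hu sp =>
      Finset.prod_nonneg (fun m _ => (hq m (u m) (hu m)).1 (sp m))
    have hQsum : ∀ u, (∀ m, u m ∈ S m) → ∑ sp : Fin n → (Fin n ≃ Fin n), Q u sp = 1 := by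
      intro u hu
      calc ∑ sp : Fin n → (Fin n ≃ Fin n), Q u sp
          = ∑ sp ∈ Fintype.piFinset (fun _ : Fin n =>
              (Finset.univ : Finset (Fin n ≃ Fin n))), ∏ m, q m (u m) (sp m) := by
            rw [Fintype.piFinset_univ]
        _ = ∏ m, ∑ σ : Fin n ≃ Fin n, q m (u m) σ := (Finset.prod_univ_sum _ _).symm
        _ = 1 := Finset.prod_eq_one (fun m _ => (hq m (u m) (hu m)).2)
    -- per-agent expected equilibrium utility and guarantee
    set EU : Fin n → ℝ := fun i => ∑ u ∈ Fintype.piFinset S, P u *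
      ∑ sp : Fin n → (Fin n ≃ Fin n), Q u sp * ∑ j, psProb sp i j * u i j with hEU
    set EM : Fin n → ℝ := fun i => ∑ u ∈ Fintype.piFinset S, P u *
      ∑ sp : Fin n → (Fin n ≃ Fin n), Q u sp * Mi i u sp with hEM
    have hEMleEU : ∀ i, EM i ≤ EU i := by
      intro i
      rw [hEM, hEU]
      simp only
      rw [decomp S D i (fun u => ∑ sp : Fin n → (Fin n ≃ Fin n), Q u sp * Mi i u sp),
        decomp S D i (fun u => ∑ sp : Fin n → (Fin n ≃ Fin n),
          Q u sp * ∑ j, psProb sp i j * u i j)]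
      apply Finset.sum_le_sum
      intro v hv
      apply mul_le_mul_of_nonneg_left _ (hD i v)
      calc ∑ u ∈ Fintype.piFinset (Function.update S i {v}),
            (∏ m ∈ Finset.univ.erase i, D m (u m)) *
              ∑ sp : Fin n → (Fin n ≃ Fin n), Q u sp * Mi i u sp
          ≤ ∑ u ∈ Fintype.piFinset (Function.update S i {v}),
            (∏ m ∈ Finset.univ.erase i, D m (u m)) *
              ∑ sp : Fin n → (Fin n ≃ Fin n), Q u sp *
                ∑ j, psProb (Function.update sp i (truthOrder v)) i j * v j := by
            apply Finset.sum_le_sum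
            intro u hu
            obtain ⟨hui, hum⟩ := mem_piFinset_update hv hu
            apply mul_le_mul_of_nonneg_left _
              (Finset.prod_nonneg (fun m _ => hD m (u m)))
            apply Finset.sum_le_sum
            intro sp _
            apply mul_le_mul_of_nonneg_left _ (hQ0 u hum sp)
            have := dev_bound hn sp i v (hSunit i v hv) (optPerm u i)
            rw [hMi]
            simp only
            rw [hui]
            exact this
        _ ≤ ∑ u ∈ Fintype.piFinset (Function.update S i {v}),
            (∏ m ∈ Finset.univ.erase i, D m (u m)) *
              ∑ sp : Fin n → (Fin n ≃ Fin n), Q u sp * ∑ j, psProb sp i j * v j :=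
            hBNE i v hv (truthOrder v)
        _ = ∑ u ∈ Fintype.piFinset (Function.update S i {v}),
            (∏ m ∈ Finset.univ.erase i, D m (u m)) *
              ∑ sp : Fin n → (Fin n ≃ Fin n), Q u sp * ∑ j, psProb sp i j * u i j := by
            apply Finset.sum_congr rfl
            intro u hu
            obtain ⟨hui, _⟩ := mem_piFinset_update hv hu
            rw [hui]
    -- the expected optimum is controlled by the deviation guarantees
    have hOPT : ∑ u ∈ Fintype.piFinset S, P u * SWopt u
        ≤ 3 * Real.sqrt n * ∑ i, EM i := by
      have hswap : ∑ i, EM i = ∑ u ∈ Fintype.piFinset S, P u *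
          ∑ sp : Fin n → (Fin n ≃ Fin n), Q u sp * ∑ i, Mi i u sp := by
        rw [hEM]
        rw [Finset.sum_comm]
        apply Finset.sum_congr rfl
        intro u _
        rw [← Finset.mul_sum]
        congr 1
        rw [Finset.sum_comm]
        apply Finset.sum_congr rfl
        intro sp _
        rw [← Finset.mul_sum]
      rw [hswap, Finset.mul_sum]
      apply Finset.sum_le_sum
      intro u hu
      have hum : ∀ m, u m ∈ S m := Fintype.mem_piFinset.1 hu
      have huSW : ∀ sp : Fin n → Fin n ≃ Fin n,
          SWopt u ≤ 3 * Real.sqrt n * ∑ i, Mi i u sp := fun sp =>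
        pointwise_opt hn u (fun m => hSunit m (u m) (hum m)) sp
      calc P u * SWopt u = P u * ((∑ sp : Fin n → (Fin n ≃ Fin n), Q u sp) * SWopt u) := by
            rw [hQsum u hum, one_mul]
        _ = P u * ∑ sp : Fin n → (Fin n ≃ Fin n), Q u sp * SWopt u := by
            rw [Finset.sum_mul]
        _ ≤ P u * ∑ sp : Fin n → (Fin n ≃ Fin n), Q u sp *
              (3 * Real.sqrt n * ∑ i, Mi i u sp) := by
            apply mul_le_mul_of_nonneg_left _ (hP0 u)
            apply Finset.sum_le_sum
            intro sp _
            exact mul_le_mul_of_nonneg_left (huSW sp) (hQ0 u hum sp)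
        _ = 3 * Real.sqrt n * (P u * ∑ sp : Fin n → (Fin n ≃ Fin n),
              Q u sp * ∑ i, Mi i u sp) := by
            rw [Finset.mul_sum, Finset.mul_sum, Finset.mul_sum]
            apply Finset.sum_congr rfl
            intro sp _
            ring
    -- the total equilibrium welfare
    have hTOT : ∑ i, EU i = ∑ u ∈ Fintype.piFinset S, P u *
        ∑ sp : Fin n → (Fin n ≃ Fin n), Q u sp * psSW u sp := by
      rw [hEU, Finset.sum_comm]
      apply Finset.sum_congr rfl
      intro u _
      rw [← Finset.mul_sum]
      congr 1
      rw [Finset.sum_comm]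
      apply Finset.sum_congr rfl
      intro sp _
      rw [← Finset.mul_sum, psSW]
    have hfinal : ∑ u ∈ Fintype.piFinset S, P u * SWopt u
        ≤ 3 * Real.sqrt n * ∑ u ∈ Fintype.piFinset S, P u *
          ∑ sp : Fin n → (Fin n ≃ Fin n), Q u sp * psSW u sp := by
      rw [← hTOT]
      refine le_trans hOPT ?_
      apply mul_le_mul_of_nonneg_left _ (by positivity)
      exact Finset.sum_le_sum (fun i _ => hEMleEU i)
    have h3pos : 0 < 3 * Real.sqrt n := by positivity
    rw [div_mul_eq_mul_div, one_mul, div_le_iff₀ h3pos]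
    calc ∑ u ∈ Fintype.piFinset S, P u * SWopt u
        ≤ 3 * Real.sqrt n * ∑ u ∈ Fintype.piFinset S, P u *
          ∑ sp : Fin n → (Fin n ≃ Fin n), Q u sp * psSW u sp := hfinal
      _ = (∑ u ∈ Fintype.piFinset S, P u *
          ∑ sp : Fin n → (Fin n ≃ Fin n), Q u sp * psSW u sp) * (3 * Real.sqrt n) := by
          ring

end PSAux

/-- The Bayesian Price of Anarchy of Probabilistic Serial is `O(√n)`: there is a
universal constant `C > 0` such that for every `n`, every profile of independent
finitely-supported distributions over unit-sum valuations (given by supports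
`S i` and weights `D i`), and every Bayes-Nash equilibrium `q` (a behavioural
strategy mapping each valuation in the support to a distribution over
orderings), the expected equilibrium welfare is at least
`(1/(C·√n))` times the expected optimal welfare. -/
theorem ps_bayes_nash_poa_sqrt_n :
    ∃ C : ℝ, 0 < C ∧
      ∀ (n : ℕ) (S : Fin n → Finset (Fin n → ℝ)) (D : Fin n → (Fin n → ℝ) → ℝ)
        (q : Fin n → (Fin n → ℝ) → (Fin n ≃ Fin n) → ℝ),
        (∀ i v, 0 ≤ D i v) →
        (∀ i, ∑ v ∈ S i, D i v = 1) →
        (∀ i, ∀ v ∈ S i, UnitSum v) →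
        (∀ i, ∀ v ∈ S i, (∀ σ : Fin n ≃ Fin n, 0 ≤ q i v σ) ∧ ∑ σ, q i v σ = 1) →
        -- Bayes-Nash equilibrium condition
        (∀ (i : Fin n), ∀ v ∈ S i, ∀ s' : Fin n ≃ Fin n,
          ∑ u ∈ Fintype.piFinset (Function.update S i {v}),
            (∏ m ∈ Finset.univ.erase i, D m (u m)) *
              ∑ sp : Fin n → (Fin n ≃ Fin n),
                (∏ m, q m (u m) (sp m)) *
                  ∑ j, psProb (Function.update sp i s') i j * v j ≤
          ∑ u ∈ Fintype.piFinset (Function.update S i {v}),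
            (∏ m ∈ Finset.univ.erase i, D m (u m)) *
              ∑ sp : Fin n → (Fin n ≃ Fin n),
                (∏ m, q m (u m) (sp m)) * ∑ j, psProb sp i j * v j) →
        (1 / (C * Real.sqrt n)) *
            ∑ u ∈ Fintype.piFinset S, (∏ m, D m (u m)) * SWopt u ≤
          ∑ u ∈ Fintype.piFinset S,
            (∏ m, D m (u m)) *
              ∑ sp : Fin n → (Fin n ≃ Fin n), (∏ m, q m (u m) (sp m)) * psSW u sp := by
  exact ⟨3, by norm_num, PSAux.main⟩
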